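/- Let f : ℝ^d → ℝ be convex and differentiable with minimizer x⋆, and let X solve the gradient flow X'(t) = -∇f(X t) with X(0) = x₀. Define V(t) = t * (f(X t) - f(x⋆)) + (1/2) * ‖X t - x⋆‖². Then V is nonincreasing on [0, ∞), and consequently for all t > 0, f(X t) - f(x⋆) ≤ ‖x₀ - x⋆‖² / (2 t). -/

import Mathlib

open scoped RealInnerProductSpace
open Real Set

theorem gradient_flow_convex_sublinear_rate
    (d : ℕ) (f : EuclideanSpace ℝ (Fin d) → ℝ) (hf : Differentiable ℝ f)
    (hconv : ∀ x y, f y ≥ f x + ⟪gradient f x, y - x⟫)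
    (xstar : EuclideanSpace ℝ (Fin d)) (hmin : ∀ y, f xstar ≤ f y)
    (x₀ : EuclideanSpace ℝ (Fin d))
    (X : ℝ → EuclideanSpace ℝ (Fin d)) (hX0 : X 0 = x₀)
    (hX : ∀ t, HasDerivAt X (-(gradient f (X t))) t) :
    AntitoneOn (fun t => t * (f (X t) - f xstar) + (1 / 2) * ‖X t - xstar‖ ^ 2)
        (Set.Ici (0 : ℝ)) ∧
      ∀ t > (0 : ℝ), f (X t) - f xstar ≤ ‖x₀ - xstar‖ ^ 2 / (2 * t) := by
  set g : ℝ → EuclideanSpace ℝ (Fin d) := fun t => gradient f (X t) with hg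
  set V : ℝ → ℝ := fun t => t * (f (X t) - f xstar) + (1 / 2) * ‖X t - xstar‖ ^ 2 with hV
  set D : ℝ → ℝ := fun t =>
    (f (X t) - f xstar) + t * (-‖g t‖ ^ 2) - ⟪X t - xstar, g t⟫ with hD
  -- derivative of f ∘ X
  have hfd : ∀ t, HasDerivAt (fun s => f (X s)) (-‖g t‖ ^ 2) t := by
    intro t
    have h1 : HasGradientAt f (g t) (X t) := (hf (X t)).hasGradientAt
    have h2 := h1.hasFDerivAt.comp_hasDerivAt t (hX t)
    simpa only [Function.comp_def, InnerProductSpace.toDual_apply_apply, (show gradient f (X t) = g t from rfl), inner_neg_right,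
      real_inner_self_eq_norm_sq, neg_neg] using h2
  -- derivative of squared norm
  have hnsq : ∀ t, HasDerivAt (fun s => (1/2 : ℝ) * ‖X s - xstar‖ ^ 2)
      (-⟪X t - xstar, g t⟫) t := by
    intro t
    have hc : HasDerivAt (fun s => X s - xstar) (-(g t)) t := (hX t).sub_const _
    have h2 := (hc.inner ℝ hc).const_mul (1/2 : ℝ)
    have heq : (fun s => (1/2 : ℝ) * ⟪X s - xstar, X s - xstar⟫)
        = fun s => (1/2 : ℝ) * ‖X s - xstar‖ ^ 2 := by
      funext s; rw [real_inner_self_eq_norm_sq]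
    rw [heq] at h2
    refine h2.congr_deriv ?_
    rw [inner_neg_right, inner_neg_left, real_inner_comm]
    ring
  have hVd : ∀ t, HasDerivAt V (D t) t := by
    intro t
    have h1 : HasDerivAt (fun s => s * (f (X s) - f xstar))
        (1 * (f (X t) - f xstar) + t * (-‖g t‖ ^ 2)) t :=
      (hasDerivAt_id t).mul ((hfd t).sub_const _)
    have := h1.add (hnsq t)
    refine this.congr_deriv ?_
    show _ = (f (X t) - f xstar) + t * (-‖g t‖ ^ 2) - ⟪X t - xstar, g t⟫; ring
  have hD_nonpos : ∀ t ∈ Set.Ici (0 : ℝ), D t ≤ 0 := by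
    intro t ht
    have hc := hconv (X t) xstar
    have h1 : f (X t) - f xstar ≤ ⟪X t - xstar, g t⟫ := by
      have : ⟪g t, xstar - X t⟫ = -⟪X t - xstar, g t⟫ := by
        rw [real_inner_comm, ← inner_neg_left]; congr 1; abel
      rw [this] at hc; linarith
    have h2 : t * (-‖g t‖ ^ 2) ≤ 0 := by
      apply mul_nonpos_of_nonneg_of_nonpos ht
      simp [sq_nonneg]
    simp only [hD]; linarith
  have hanti : AntitoneOn V (Set.Ici (0 : ℝ)) := by
    apply antitoneOn_of_deriv_nonpos (convex_Ici 0)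
    · exact fun t _ => ((hVd t).continuousAt).continuousWithinAt
    · exact fun t _ => (hVd t).differentiableAt.differentiableWithinAt
    · intro t _
      rw [(hVd t).deriv]
      exact hD_nonpos t (le_of_lt (by simpa using ‹t ∈ interior (Set.Ici (0:ℝ))›))
  refine ⟨hanti, fun t ht => ?_⟩
  have h0 : V 0 = (1/2) * ‖x₀ - xstar‖ ^ 2 := by simp [hV, hX0]
  have hVt : V t ≤ V 0 := hanti Set.self_mem_Ici (le_of_lt ht) (le_of_lt ht)
  have h1 : t * (f (X t) - f xstar) ≤ (1/2) * ‖x₀ - xstar‖ ^ 2 := by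
    have hn : (0:ℝ) ≤ (1/2) * ‖X t - xstar‖ ^ 2 := by positivity
    simp only [hV] at hVt h0
    linarith
  rw [le_div_iff₀ (by linarith)]
  nlinarith
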